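/- If u and w are two non-adjacent cheap vertices in a finite simple graph G having at least one common neighbor, then {u, w} is a 1-cheap set, i.e., Σ_{v ∈ N[{u,w}]} 1/(ζ(v) + 1/2) ≤ 2. -/

import Mathlib

open SimpleGraph Finset

/-- The minimum degree of a subgraph `H` of `G`: the infimum over vertices of `H`
of the number of neighbors in `H`. -/
noncomputable def subMinDeg {V : Type*} (G : SimpleGraph V) (H : G.Subgraph) : ℕ :=
  sInf ((fun v => (H.neighborSet v).ncard) '' H.verts)

/-- The degenerate degree `ζ(v)`: the maximum of `δ(H)` over all subgraphs `H` of `G`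
containing `v`. -/
noncomputable def zeta {V : Type*} (G : SimpleGraph V) (v : V) : ℕ :=
  sSup {n | ∃ H : G.Subgraph, v ∈ H.verts ∧ subMinDeg G H = n}

/-- A vertex `u` is cheap if `ζ(u) = deg_G(u)` and `ζ(u) ≤ ζ(w)` for every `w ∈ N[u]`. -/
def Cheap {V : Type*} (G : SimpleGraph V) (u : V) : Prop :=
  zeta G u = (G.neighborSet u).ncard ∧ ∀ w, G.Adj u w → zeta G u ≤ zeta G w

lemma aux_cheap {V : Type*} [Fintype V] [DecidableEq V] (G : SimpleGraph V)
    [DecidableRel G.Adj] (u w : V) (hne : u ≠ w) (hnadj : ¬ G.Adj u w)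
    (hu : Cheap G u) (hw : Cheap G w)
    (hcommon : ∃ p : V, G.Adj u p ∧ G.Adj w p)
    (hle : zeta G u ≤ zeta G w) :
    (∑ v ∈ Finset.univ.filter
        (fun v => v = u ∨ v = w ∨ G.Adj u v ∨ G.Adj w v),
      (1 : ℝ) / (zeta G v + 1/2)) ≤ 2 := by
  obtain ⟨p, hpu, hpw⟩ := hcommon
  set a : ℝ := (zeta G u : ℝ) with ha
  set b : ℝ := (zeta G w : ℝ) with hb
  have hab : a ≤ b := by rw [ha, hb]; exact_mod_cast hle
  have hapos : (0:ℝ) < a + 1/2 := by positivity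
  have hbpos : (0:ℝ) < b + 1/2 := by positivity
  set Nu := G.neighborFinset u with hNu
  set Nw := G.neighborFinset w with hNw
  have hcardu : (Nu.card : ℝ) = a := by
    rw [ha, hu.1]
    rw [← Set.ncard_coe_finset Nu, hNu, neighborFinset_def]
    simp
  have hcardw : (Nw.card : ℝ) = b := by
    rw [hb, hw.1]
    rw [← Set.ncard_coe_finset Nw, hNw, neighborFinset_def]
    simp
  -- rewrite the index set
  have hset : Finset.univ.filter
      (fun v => v = u ∨ v = w ∨ G.Adj u v ∨ G.Adj w v)
      = insert u (insert w (Nu ∪ Nw)) := by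
    ext v
    simp only [Finset.mem_filter, Finset.mem_univ, true_and, Finset.mem_insert,
      Finset.mem_union, hNu, hNw, mem_neighborFinset]
  rw [hset]
  have hwn : w ∉ Nu ∪ Nw := by
    simp only [Finset.mem_union, hNu, hNw, mem_neighborFinset]
    push_neg
    exact ⟨hnadj, G.irrefl⟩
  have hun : u ∉ insert w (Nu ∪ Nw) := by
    simp only [Finset.mem_insert, Finset.mem_union, hNu, hNw, mem_neighborFinset]
    push_neg
    exact ⟨hne, G.irrefl, fun h => hnadj h.symm⟩
  rw [Finset.sum_insert hun, Finset.sum_insert hwn]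
  -- bound sums over neighbor sets
  have hsplit : Nu ∪ Nw = (Nu \ Nw) ∪ Nw := (Finset.sdiff_union_self_eq_union).symm
  rw [hsplit, Finset.sum_union Finset.sdiff_disjoint]
  have hbound1 : ∀ v ∈ Nu \ Nw, (1:ℝ) / (zeta G v + 1/2) ≤ 1 / (a + 1/2) := by
    intro v hv
    have hadj : G.Adj u v := by
      rw [Finset.mem_sdiff, hNu, mem_neighborFinset] at hv
      exact hv.1
    have : a ≤ (zeta G v : ℝ) := by rw [ha]; exact_mod_cast hu.2 v hadj
    apply one_div_le_one_div_of_le hapos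
    linarith
  have hbound2 : ∀ v ∈ Nw, (1:ℝ) / (zeta G v + 1/2) ≤ 1 / (b + 1/2) := by
    intro v hv
    have hadj : G.Adj w v := by rwa [hNw, mem_neighborFinset] at hv
    have : b ≤ (zeta G v : ℝ) := by rw [hb]; exact_mod_cast hw.2 v hadj
    apply one_div_le_one_div_of_le hbpos
    linarith
  have hs1 : ∑ v ∈ Nu \ Nw, (1:ℝ) / (zeta G v + 1/2)
      ≤ ((Nu \ Nw).card : ℝ) * (1 / (a + 1/2)) := by
    calc ∑ v ∈ Nu \ Nw, (1:ℝ) / (zeta G v + 1/2)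
        ≤ ∑ _v ∈ Nu \ Nw, 1 / (a + 1/2) := Finset.sum_le_sum hbound1
      _ = ((Nu \ Nw).card : ℝ) * (1 / (a + 1/2)) := by
          rw [Finset.sum_const, nsmul_eq_mul]
  have hs2 : ∑ v ∈ Nw, (1:ℝ) / (zeta G v + 1/2) ≤ b * (1 / (b + 1/2)) := by
    calc ∑ v ∈ Nw, (1:ℝ) / (zeta G v + 1/2)
        ≤ ∑ _v ∈ Nw, 1 / (b + 1/2) := Finset.sum_le_sum hbound2
      _ = b * (1 / (b + 1/2)) := by rw [Finset.sum_const, nsmul_eq_mul, hcardw]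
  -- card (Nu \ Nw) ≤ a - 1
  have hpNu : p ∈ Nu := by rw [hNu, mem_neighborFinset]; exact hpu
  have hcard_sdiff : ((Nu \ Nw).card : ℝ) ≤ a - 1 := by
    have hsub : Nu \ Nw ⊆ Nu.erase p := by
      intro x hx
      rw [Finset.mem_sdiff] at hx
      rw [Finset.mem_erase]
      refine ⟨?_, hx.1⟩
      rintro rfl
      exact hx.2 (by rw [hNw, mem_neighborFinset]; exact hpw)
    have h1 : (Nu \ Nw).card ≤ Nu.card - 1 := by
      calc (Nu \ Nw).card ≤ (Nu.erase p).card := Finset.card_le_card hsub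
        _ = Nu.card - 1 := Finset.card_erase_of_mem hpNu
    have h2 : 1 ≤ Nu.card := Finset.card_pos.mpr ⟨p, hpNu⟩
    have := Nat.cast_le (α := ℝ) |>.mpr h1
    rw [Nat.cast_sub h2] at this
    push_cast at this ⊢
    linarith [hcardu, this]
  have hs1' : ∑ v ∈ Nu \ Nw, (1:ℝ) / (zeta G v + 1/2)
      ≤ (a - 1) * (1 / (a + 1/2)) := by
    calc ∑ v ∈ Nu \ Nw, (1:ℝ) / (zeta G v + 1/2)
        ≤ ((Nu \ Nw).card : ℝ) * (1 / (a + 1/2)) := hs1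
      _ ≤ (a - 1) * (1 / (a + 1/2)) := by
          apply mul_le_mul_of_nonneg_right hcard_sdiff (by positivity)
  -- final arithmetic
  have hfu : (1:ℝ) / (zeta G u + 1/2) = 1 / (a + 1/2) := by rw [ha]
  have hfw : (1:ℝ) / (zeta G w + 1/2) = 1 / (b + 1/2) := by rw [hb]
  rw [hfu, hfw]
  have key : 1 / (a + 1/2) + (a - 1) * (1 / (a + 1/2))
      + (1 / (b + 1/2) + b * (1 / (b + 1/2))) ≤ 2 := by
    field_simp
    rw [div_add_div _ _ (by positivity) (by positivity), div_le_one (by positivity)]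
    nlinarith [hab, hapos, hbpos]
  linarith [hs1', hs2]

theorem stmt_12 {V : Type*} [Fintype V] [DecidableEq V] (G : SimpleGraph V)
    [DecidableRel G.Adj] (u w : V) (hne : u ≠ w) (hnadj : ¬ G.Adj u w)
    (hu : Cheap G u) (hw : Cheap G w)
    (hcommon : ∃ p : V, G.Adj u p ∧ G.Adj w p) :
    (∑ v ∈ Finset.univ.filter
        (fun v => v = u ∨ v = w ∨ G.Adj u v ∨ G.Adj w v),
      (1 : ℝ) / (zeta G v + 1/2)) ≤ 2 := by
  rcases le_total (zeta G u) (zeta G w) with h | h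
  · exact aux_cheap G u w hne hnadj hu hw hcommon h
  · obtain ⟨p, hp1, hp2⟩ := hcommon
    have hswap : Finset.univ.filter
        (fun v => v = u ∨ v = w ∨ G.Adj u v ∨ G.Adj w v)
        = Finset.univ.filter
        (fun v => v = w ∨ v = u ∨ G.Adj w v ∨ G.Adj u v) := by
      ext v; simp only [Finset.mem_filter, Finset.mem_univ, true_and]; tauto
    rw [hswap]
    exact aux_cheap G w u hne.symm (fun hh => hnadj hh.symm) hw hu ⟨p, hp2, hp1⟩ h
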